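/- For the learning rates α_t = (H+1)/(H+t) with H ≥ 1 and weights α_t^i := α_i · ∏_{j=i+1}^t (1 − α_j), for every t ≥ 1 it holds that 1/√t ≤ ∑_{i=1}^t α_t^i/√i ≤ 2/√t. -/

import Mathlib

open Finset

noncomputable def lr (H : ℕ) (t : ℕ) : ℝ := ((H : ℝ) + 1) / ((H : ℝ) + t)

noncomputable def w (H : ℕ) (t i : ℕ) : ℝ :=
  lr H i * ∏ j ∈ Finset.Icc (i + 1) t, (1 - lr H j)

noncomputable def w0 (H : ℕ) (t : ℕ) : ℝ :=
  ∏ j ∈ Finset.Icc 1 t, (1 - lr H j)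

lemma lr_nonneg (H t : ℕ) : 0 ≤ lr H t := by
  unfold lr
  apply div_nonneg <;> positivity

lemma one_sub_lr_nonneg (H : ℕ) {j : ℕ} (hj : 1 ≤ j) : 0 ≤ 1 - lr H j := by
  unfold lr
  rw [sub_nonneg]
  apply div_le_one_of_le₀
  · have : (1:ℝ) ≤ j := by exact_mod_cast hj
    linarith
  · positivity

lemma w_nonneg (H t i : ℕ) : 0 ≤ w H t i := by
  unfold w
  apply mul_nonneg (lr_nonneg H i)
  apply Finset.prod_nonneg
  intro j hj
  simp only [Finset.mem_Icc] at hj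
  exact one_sub_lr_nonneg H (by omega)

lemma w_succ (H t i : ℕ) (h : i ≤ t) :
    w H (t+1) i = w H t i * (1 - lr H (t+1)) := by
  unfold w
  rw [Finset.prod_Icc_succ_top (by omega : i + 1 ≤ t + 1)]
  ring

lemma w_self (H t : ℕ) : w H t t = lr H t := by
  unfold w
  rw [Finset.Icc_eq_empty (by omega), Finset.prod_empty, mul_one]

lemma lr_one (H : ℕ) : lr H 1 = 1 := by
  unfold lr
  push_cast
  rw [div_self]
  positivity

lemma sum_w (H : ℕ) : ∀ t, 1 ≤ t → ∑ i ∈ Finset.Icc 1 t, w H t i = 1 := by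
  intro t ht
  induction t, ht using Nat.le_induction with
  | base => simp [w_self, lr_one]
  | succ t ht ih =>
    rw [Finset.sum_Icc_succ_top (by omega : 1 ≤ t + 1), w_self]
    have : ∑ i ∈ Finset.Icc 1 t, w H (t+1) i
        = ∑ i ∈ Finset.Icc 1 t, w H t i * (1 - lr H (t+1)) := by
      apply Finset.sum_congr rfl
      intro i hi
      simp only [Finset.mem_Icc] at hi
      exact w_succ H t i hi.2
    rw [this, ← Finset.sum_mul, ih]
    ring

theorem weighted_inv_sqrt_bounds (H : ℕ) (hH : 1 ≤ H) (t : ℕ) (ht : 1 ≤ t) :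
    1 / Real.sqrt t ≤ ∑ i ∈ Finset.Icc 1 t, w H t i / Real.sqrt i ∧
    ∑ i ∈ Finset.Icc 1 t, w H t i / Real.sqrt i ≤ 2 / Real.sqrt t := by
  constructor
  · -- lower bound
    have h1 : (1:ℝ) / Real.sqrt t = ∑ i ∈ Finset.Icc 1 t, w H t i / Real.sqrt t := by
      rw [← Finset.sum_div, sum_w H t ht]
    rw [h1]
    apply Finset.sum_le_sum
    intro i hi
    simp only [Finset.mem_Icc] at hi
    have hit : Real.sqrt i ≤ Real.sqrt t := by
      apply Real.sqrt_le_sqrt; exact_mod_cast hi.2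
    have hip : 0 < Real.sqrt i := by
      apply Real.sqrt_pos.mpr; exact_mod_cast hi.1
    exact div_le_div_of_nonneg_left (w_nonneg H t i) hip hit
  · -- upper bound
    induction t, ht using Nat.le_induction with
    | base =>
      simp [w_self, lr_one]
    | succ t ht ih =>
      set a := Real.sqrt t with ha
      set b := Real.sqrt (t+1 : ℕ) with hb
      have hta : (0:ℝ) < t := by exact_mod_cast ht
      have hap : 0 < a := Real.sqrt_pos.mpr hta
      have hbp : 0 < b := Real.sqrt_pos.mpr (by push_cast; linarith)
      have ha2 : a ^ 2 = t := Real.sq_sqrt (le_of_lt hta)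
      have hb2 : b ^ 2 = (t:ℝ) + 1 := by
        rw [hb]; rw [Real.sq_sqrt (by positivity)]; push_cast; ring
      have hc : (0:ℝ) < (H:ℝ) + (t+1) := by positivity
      have halpha : lr H (t+1) = ((H:ℝ)+1) / ((H:ℝ)+(t+1)) := by
        unfold lr; push_cast; ring_nf
      have hone_sub : 1 - lr H (t+1) = (t:ℝ) / ((H:ℝ)+(t+1)) := by
        rw [halpha]; field_simp; ring
      -- recurrence
      have hrec : ∑ i ∈ Finset.Icc 1 (t+1), w H (t+1) i / Real.sqrt i
          = (1 - lr H (t+1)) * (∑ i ∈ Finset.Icc 1 t, w H t i / Real.sqrt i)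
            + lr H (t+1) / b := by
        rw [Finset.sum_Icc_succ_top (by omega : 1 ≤ t + 1), w_self]
        have : ∑ i ∈ Finset.Icc 1 t, w H (t+1) i / Real.sqrt i
            = ∑ i ∈ Finset.Icc 1 t, (1 - lr H (t+1)) * (w H t i / Real.sqrt i) := by
          apply Finset.sum_congr rfl
          intro i hi
          simp only [Finset.mem_Icc] at hi
          rw [w_succ H t i hi.2]; ring
        rw [this, ← Finset.mul_sum]
      rw [hrec]
      have hkey : 2 * (t:ℝ) * b ≤ ((H:ℝ) + 2*t + 1) * a := by
        have hHc : (1:ℝ) ≤ H := by exact_mod_cast hH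
        have hsq : (2 * (t:ℝ) * b) ^ 2 ≤ (((H:ℝ) + 2*t + 1) * a) ^ 2 := by
          have e1 : (2 * (t:ℝ) * b) ^ 2 = 4 * t^2 * (t+1) := by
            rw [mul_pow, mul_pow, hb2]; ring
          have e2 : (((H:ℝ) + 2*t + 1) * a) ^ 2 = ((H:ℝ) + 2*t + 1)^2 * t := by
            rw [mul_pow, ha2]
          rw [e1, e2]
          nlinarith [sq_nonneg ((H:ℝ) - 1), sq_nonneg ((H:ℝ) + 2*t)]
        have h1 : 0 ≤ 2 * (t:ℝ) * b := by positivity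
        have h2 : 0 ≤ ((H:ℝ) + 2*t + 1) * a := by positivity
        exact (pow_le_pow_iff_left₀ h1 h2 two_ne_zero).mp hsq
      have hsub : (1 - lr H (t+1)) * (∑ i ∈ Finset.Icc 1 t, w H t i / Real.sqrt i)
          ≤ (1 - lr H (t+1)) * (2 / a) := by
        apply mul_le_mul_of_nonneg_left ih (one_sub_lr_nonneg H (by omega))
      have hfinal : (1 - lr H (t+1)) * (2 / a) + lr H (t+1) / b ≤ 2 / b := by
        rw [hone_sub, halpha]
        rw [div_mul_div_comm, div_div, div_add_div _ _ (by positivity) (by positivity),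
          div_le_div_iff₀ (by positivity) hbp]
        have hmul := mul_le_mul_of_nonneg_left hkey (le_of_lt (mul_pos hc hbp))
        nlinarith [hb2, mul_pos hap hbp, mul_pos hc (mul_pos hap hbp)]
      have : (↑(t+1) : ℝ) = (t:ℝ) + 1 := by push_cast; ring
      calc (1 - lr H (t+1)) * (∑ i ∈ Finset.Icc 1 t, w H t i / Real.sqrt i)
            + lr H (t+1) / b
          ≤ (1 - lr H (t+1)) * (2 / a) + lr H (t+1) / b := by linarith
        _ ≤ 2 / b := hfinal
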